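/- arXiv:1602.02329 — 2 statements merged into one kernel-verified Lean document; each statement's English description precedes it below -/
import Mathlib

section
/- Let v be a weight on ℝ such that v^{-1} (the reciprocal of v) is also a weight, and let {λ_I}_{I∈D} be a sequence of nonnegative numbers for which there exists Q > 0 with (1/|J|) Σ_{I∈D(J)} λ_I ≤ Q for every dyadic interval J ∈ D. Then for every J ∈ D: (1/|J|) Σ_{I∈D(J)} λ_I / m_I(v^{-1}) ≤ 4Q · m_J v. Consequently, if in addition [v]_{A_2^d} < ∞, then for every J ∈ D: (1/|J|) Σ_{I∈D(J)} λ_I · m_I v ≤ 4Q · [v]_{A_2^d} · m_J v. -/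
open MeasureTheory Set

/-- The dyadic interval `[2^j k, 2^j (k+1))` indexed by `(j, k)`. -/
abbrev DI := ℤ × ℤ

noncomputable def DIset (I : DI) : Set ℝ :=
  Set.Ico ((2:ℝ)^I.1 * I.2) ((2:ℝ)^I.1 * (I.2 + 1))

noncomputable def DIlen (I : DI) : ℝ := (2:ℝ)^I.1

/-- The left half `I⁺` of a dyadic interval. -/
def DIleft (I : DI) : DI := (I.1 - 1, 2 * I.2)

/-- The right half `I⁻` of a dyadic interval. -/
def DIright (I : DI) : DI := (I.1 - 1, 2 * I.2 + 1)

/-- `I ∈ D(J)`: `I` is a dyadic subinterval of `J`. -/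
def DIsub (I J : DI) : Prop := DIset I ⊆ DIset J

/-- `m_I f`, the average of `f` over `I`. -/
noncomputable def avg (f : ℝ → ℝ) (I : DI) : ℝ := (DIlen I)⁻¹ * ∫ x in DIset I, f x

/-- The `L²`-normalized Haar function of `I`. -/
noncomputable def haar (I : DI) : ℝ → ℝ := fun x =>
  (Real.sqrt (DIlen I))⁻¹ *
    ((DIset (DIleft I)).indicator (fun _ => (1:ℝ)) x
      - (DIset (DIright I)).indicator (fun _ => (1:ℝ)) x)

/-- `⟨f, h_I⟩`. -/
noncomputable def haarCoef (f : ℝ → ℝ) (I : DI) : ℝ := ∫ x, f x * haar I x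

/-- A weight: measurable, a.e. positive, locally integrable. -/
def IsWeight (w : ℝ → ℝ) : Prop :=
  Measurable w ∧ (∀ᵐ x ∂(volume : Measure ℝ), 0 < w x) ∧ LocallyIntegrable w volume

/-- The measure `w dx`. -/
noncomputable def wMeasure (w : ℝ → ℝ) : Measure ℝ :=
  volume.withDensity (fun x => ENNReal.ofReal (w x))

/-- `Δ_I f = m_{I⁺} f − m_{I⁻} f`. -/
noncomputable def deltaAvg (f : ℝ → ℝ) (I : DI) : ℝ := avg f (DIleft I) - avg f (DIright I)


namespace CA

lemma two_zpow_pos (j : ℤ) : (0:ℝ) < 2 ^ j := zpow_pos (by norm_num) j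
lemma DIlen_pos (I : DI) : 0 < DIlen I := two_zpow_pos I.1
lemma two_zpow_half (j : ℤ) : (2:ℝ)^(j-1) * 2 = 2^j := by
  rw [zpow_sub_one₀ (two_ne_zero)]; ring

lemma DIlen_left (J : DI) : DIlen (DIleft J) = DIlen J / 2 := by
  have h := two_zpow_half J.1
  unfold DIlen DIleft
  simp only
  linarith

lemma DIlen_right (J : DI) : DIlen (DIright J) = DIlen J / 2 := by
  have h := two_zpow_half J.1
  unfold DIlen DIright
  simp only
  linarith

lemma DIset_eq (I : DI) : DIset I = Ico ((2:ℝ)^I.1 * I.2) ((2:ℝ)^I.1 * I.2 + DIlen I) := by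
  unfold DIset DIlen
  rw [show (2:ℝ)^I.1 * (I.2 + 1) = (2:ℝ)^I.1 * I.2 + (2:ℝ)^I.1 by ring]

lemma DIset_left (J : DI) :
    DIset (DIleft J) = Ico ((2:ℝ)^J.1 * J.2) ((2:ℝ)^J.1 * J.2 + 2^(J.1-1)) := by
  have h := two_zpow_half J.1
  unfold DIset DIleft
  simp only
  rw [show (2:ℝ)^(J.1-1) * ((2*J.2 : ℤ) : ℝ) = (2:ℝ)^J.1 * J.2 by push_cast; linear_combination (J.2:ℝ) * h,
    show (2:ℝ)^(J.1-1) * (((2*J.2 : ℤ) : ℝ) + 1) = (2:ℝ)^J.1 * J.2 + 2^(J.1-1) by push_cast; linear_combination (J.2:ℝ) * h]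

lemma DIset_right (J : DI) :
    DIset (DIright J) = Ico ((2:ℝ)^J.1 * J.2 + 2^(J.1-1)) ((2:ℝ)^J.1 * J.2 + DIlen J) := by
  have h := two_zpow_half J.1
  unfold DIset DIright DIlen
  simp only
  rw [show (2:ℝ)^(J.1-1) * ((2*J.2+1 : ℤ) : ℝ) = (2:ℝ)^J.1 * J.2 + 2^(J.1-1) by push_cast; linear_combination (J.2:ℝ) * h,
    show (2:ℝ)^(J.1-1) * (((2*J.2+1 : ℤ) : ℝ) + 1) = (2:ℝ)^J.1 * J.2 + 2^J.1 by push_cast; linear_combination ((J.2:ℝ)+1) * h]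

lemma DIset_split (J : DI) : DIset J = DIset (DIleft J) ∪ DIset (DIright J) := by
  rw [DIset_eq, DIset_left, DIset_right, Ico_union_Ico_eq_Ico]
  · linarith [two_zpow_pos (J.1-1)]
  · have h := two_zpow_half J.1
    have := two_zpow_pos (J.1-1)
    unfold DIlen; linarith

lemma DIset_disj (J : DI) : Disjoint (DIset (DIleft J)) (DIset (DIright J)) := by
  rw [DIset_left, DIset_right]; exact Ico_disjoint_Ico_same

lemma measurableSet_DIset (I : DI) : MeasurableSet (DIset I) := measurableSet_Ico

lemma DIset_nonempty (I : DI) : (DIset I).Nonempty := by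
  rw [DIset_eq]; exact nonempty_Ico.2 (by linarith [DIlen_pos I])

lemma volume_DIset (I : DI) : volume (DIset I) = ENNReal.ofReal (DIlen I) := by
  rw [DIset_eq, Real.volume_Ico]; congr 1; ring

lemma integrableOn_DIset {f : ℝ → ℝ} (hf : LocallyIntegrable f volume) (I : DI) :
    IntegrableOn f (DIset I) volume := by
  rw [DIset_eq]
  exact ((hf.integrableOn_isCompact isCompact_Icc).mono_set Ico_subset_Icc_self)

lemma avg_split {f : ℝ → ℝ} (hf : LocallyIntegrable f volume) (J : DI) :
    avg f J = (avg f (DIleft J) + avg f (DIright J)) / 2 := by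
  have hint : ∫ x in DIset J, f x
      = (∫ x in DIset (DIleft J), f x) + ∫ x in DIset (DIright J), f x := by
    rw [DIset_split J]
    exact setIntegral_union (DIset_disj J) (measurableSet_DIset _)
      (integrableOn_DIset hf _) (integrableOn_DIset hf _)
  unfold avg
  rw [hint, DIlen_left, DIlen_right]
  have h1 := DIlen_pos J
  field_simp

lemma setIntegral_weight_pos {w : ℝ → ℝ} (hw : IsWeight w) (I : DI) :
    0 < ∫ x in DIset I, w x := by
  have hi : IntegrableOn w (DIset I) volume := integrableOn_DIset hw.2.2 I
  rw [setIntegral_pos_iff_support_of_nonneg_ae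
    (ae_restrict_of_ae (hw.2.1.mono fun x hx => hx.le)) hi]
  have h1 : volume (DIset I) ≤ volume (Function.support w ∩ DIset I) := by
    apply measure_mono_ae
    filter_upwards [hw.2.1] with x hx hxs
    exact ⟨ne_of_gt hx, hxs⟩
  calc (0:ENNReal) < volume (DIset I) := by
        rw [volume_DIset]; exact ENNReal.ofReal_pos.2 (DIlen_pos I)
    _ ≤ _ := h1

lemma avg_pos {w : ℝ → ℝ} (hw : IsWeight w) (I : DI) : 0 < avg w I :=
  mul_pos (inv_pos.2 (DIlen_pos I)) (setIntegral_weight_pos hw I)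

end CA



namespace CA

lemma one_le_avg_mul_avg {v : ℝ → ℝ} (hv : IsWeight v)
    (hvinv : IsWeight (fun x => (v x)⁻¹)) (I : DI) :
    1 ≤ avg v I * avg (fun x => (v x)⁻¹) I := by
  have hApos : 0 < ∫ x in DIset I, v x := setIntegral_weight_pos hv I
  have hBpos : 0 < ∫ x in DIset I, (v x)⁻¹ := setIntegral_weight_pos hvinv I
  set A := ∫ x in DIset I, v x with hA
  set B := ∫ x in DIset I, (v x)⁻¹ with hB
  have hL : 0 < DIlen I := DIlen_pos I
  set t := Real.sqrt B / Real.sqrt A with ht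
  have hsA : 0 < Real.sqrt A := Real.sqrt_pos.2 hApos
  have hsB : 0 < Real.sqrt B := Real.sqrt_pos.2 hBpos
  have h6 : Real.sqrt A * Real.sqrt A = A := Real.mul_self_sqrt hApos.le
  have h7 : Real.sqrt B * Real.sqrt B = B := Real.mul_self_sqrt hBpos.le
  have htpos : 0 < t := div_pos hsB hsA
  have h2 : ∫ x in DIset I, (2:ℝ) ≤ ∫ x in DIset I, (t * v x + t⁻¹ * (v x)⁻¹) := by
    apply setIntegral_mono_ae_restrict
    · exact integrableOn_const (by rw [volume_DIset]; exact ENNReal.ofReal_ne_top)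
    · exact ((integrableOn_DIset hv.2.2 I).const_mul t).add
        ((integrableOn_DIset hvinv.2.2 I).const_mul t⁻¹)
    · apply ae_restrict_of_ae
      filter_upwards [hv.2.1] with x hx
      have h3 : 0 < t * v x := mul_pos htpos hx
      have key : (t * v x) + (t * v x)⁻¹ - 2 = (t * v x - 1)^2 * (t * v x)⁻¹ := by
        field_simp
        ring
      have h4 : (2:ℝ) ≤ (t * v x) + (t * v x)⁻¹ := by
        nlinarith [mul_nonneg (sq_nonneg (t * v x - 1)) (inv_pos.2 h3).le]
      calc (2:ℝ) ≤ (t * v x) + (t * v x)⁻¹ := h4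
        _ = t * v x + t⁻¹ * (v x)⁻¹ := by rw [mul_inv]
  have h5 : ∫ x in DIset I, (t * v x + t⁻¹ * (v x)⁻¹) = t*A + t⁻¹*B := by
    rw [integral_add ((integrableOn_DIset hv.2.2 I).const_mul t)
      ((integrableOn_DIset hvinv.2.2 I).const_mul t⁻¹), integral_const_mul, integral_const_mul,
      ← hA, ← hB]
  rw [setIntegral_const, measureReal_def, volume_DIset, ENNReal.toReal_ofReal hL.le, smul_eq_mul, h5] at h2
  have e4 : t * A = Real.sqrt A * Real.sqrt B := by
    rw [ht]; field_simp; linear_combination (-1 : ℝ) * h6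
  have e5 : t⁻¹ * B = Real.sqrt A * Real.sqrt B := by
    rw [ht, inv_div]; field_simp; linear_combination (-1 : ℝ) * h7
  rw [e4, e5] at h2
  have h8 : DIlen I ≤ Real.sqrt A * Real.sqrt B := by linarith
  have h10 := mul_self_le_mul_self hL.le h8
  have h11 : (Real.sqrt A * Real.sqrt B) * (Real.sqrt A * Real.sqrt B) = A * B := by
    rw [show (Real.sqrt A * Real.sqrt B) * (Real.sqrt A * Real.sqrt B)
      = (Real.sqrt A * Real.sqrt A) * (Real.sqrt B * Real.sqrt B) by ring, h6, h7]
  have h9 : DIlen I * DIlen I ≤ A * B := by linarith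
  simp only [avg]
  rw [← hA, ← hB]
  rw [show (DIlen I)⁻¹ * A * ((DIlen I)⁻¹ * B) = (A*B)/(DIlen I * DIlen I) by ring,
    le_div_iff₀ (by positivity)]
  linarith

lemma sub_endpoints {I J : DI} (h : DIsub I J) :
    (2:ℝ)^J.1 * J.2 ≤ 2^I.1 * I.2 ∧ (2:ℝ)^I.1 * I.2 + DIlen I ≤ 2^J.1 * J.2 + DIlen J := by
  have h' := h
  rw [DIsub, DIset_eq, DIset_eq] at h'
  exact (Ico_subset_Ico_iff (by linarith [DIlen_pos I])).1 h'

lemma sub_scale_le {I J : DI} (h : DIsub I J) : I.1 ≤ J.1 := by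
  have h1 := sub_endpoints h
  have h2 : DIlen I ≤ DIlen J := by linarith [h1.1, h1.2]
  exact (zpow_le_zpow_iff_right₀ (by norm_num : (1:ℝ) < 2)).1 h2

lemma sub_eq_of_scale {I J : DI} (h : DIsub I J) (hs : I.1 = J.1) : I = J := by
  have h1 := sub_endpoints h
  have hlen : DIlen I = DIlen J := by unfold DIlen; rw [hs]
  have h2 : (2:ℝ)^I.1 * I.2 = 2^J.1 * J.2 := by linarith [h1.1, h1.2]
  rw [hs] at h2
  have h3 : (I.2 : ℝ) = J.2 := mul_left_cancel₀ (ne_of_gt (two_zpow_pos J.1)) h2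
  have h4 : I.2 = J.2 := by exact_mod_cast h3
  exact Prod.ext hs h4

lemma sub_left_or_right {I J : DI} (h : DIsub I J) (hne : I ≠ J) :
    DIsub I (DIleft J) ∨ DIsub I (DIright J) := by
  have hsle := sub_scale_le h
  have hs : I.1 ≤ J.1 - 1 := by
    rcases lt_or_eq_of_le hsle with h' | h'
    · omega
    · exact absurd (sub_eq_of_scale h h') hne
  have hend := sub_endpoints h
  obtain ⟨N, hN⟩ : ∃ N : ℤ, (2:ℝ)^J.1 * J.2 + 2^(J.1-1) = 2^I.1 * (N:ℝ) := by
    refine ⟨2^(J.1-1-I.1).toNat * (2*J.2+1), ?_⟩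
    have h1 : (2:ℝ)^I.1 * 2^(J.1-1-I.1) = 2^(J.1-1) := by
      rw [← zpow_add₀ (two_ne_zero : (2:ℝ) ≠ 0)]
      congr 1
      omega
    have h2 : ((2:ℝ)^((J.1-1-I.1).toNat) : ℝ) = (2:ℝ)^(J.1-1-I.1) := by
      rw [← zpow_natCast, Int.toNat_of_nonneg (by omega)]
    push_cast
    rw [h2]
    linear_combination (-(2*(J.2:ℝ)+1)) * h1 + (-(J.2:ℝ)) * two_zpow_half J.1
  by_cases hlt : (2:ℝ)^I.1 * I.2 < 2^J.1 * J.2 + 2^(J.1-1)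
  · left
    rw [DIsub, DIset_eq, DIset_left]
    apply Ico_subset_Ico hend.1
    rw [hN] at hlt ⊢
    have hIN : (I.2:ℝ) < N := (mul_lt_mul_iff_right₀ (two_zpow_pos I.1)).1 hlt
    have hIN2 : I.2 + 1 ≤ N := by exact_mod_cast hIN
    have hIN3 : (I.2:ℝ) + 1 ≤ N := by exact_mod_cast hIN2
    unfold DIlen
    nlinarith [two_zpow_pos I.1]
  · right
    rw [DIsub, DIset_eq, DIset_right]
    exact Ico_subset_Ico (not_lt.1 hlt) hend.2

lemma not_sub_left_self (J : DI) : ¬ DIsub J (DIleft J) := by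
  intro h
  have h1 := sub_scale_le h
  have h2 : (DIleft J).1 = J.1 - 1 := rfl
  omega

lemma not_sub_both {I J : DI} (h1 : DIsub I (DIleft J)) (h2 : DIsub I (DIright J)) : False := by
  obtain ⟨x, hx⟩ := DIset_nonempty I
  exact Set.disjoint_left.1 (DIset_disj J) (h1 hx) (h2 hx)

end CA



namespace CA

lemma bellman_core {Q mp mm lp lm d : ℝ} (hQ : 0 < Q) (hmp : 0 < mp) (hmm : 0 < mm)
    (hlp : 0 ≤ lp) (hlm : 0 ≤ lm) (hd : 0 ≤ d) (hle : (lp+lm)/2 + d ≤ Q) :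
    d / (4*Q*((mp+mm)/2)) + Q / (((mp+mm)/2) * (Q + ((lp+lm)/2 + d)))
      ≤ (Q/(mp*(Q+lp)) + Q/(mm*(Q+lm))) / 2 := by
  have hQlp : 0 < Q + lp := by linarith
  have hQlm : 0 < Q + lm := by linarith
  have hm : 0 < (mp+mm)/2 := by linarith
  have hQlbar : 0 < Q + (lp+lm)/2 := by linarith
  have hQl : 0 < Q + ((lp+lm)/2 + d) := by linarith
  have h1 : Q / (((mp+mm)/2) * (Q + (lp+lm)/2)) ≤ (Q/(mp*(Q+lp)) + Q/(mm*(Q+lm))) / 2 := by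
    rw [div_add_div _ _ (by positivity) (by positivity), div_div,
      div_le_div_iff₀ (by positivity) (by positivity)]
    nlinarith [sq_nonneg (mp*(Q+lp) - mm*(Q+lm)),
      mul_nonneg (mul_nonneg (mul_nonneg hQ.le hQlp.le) hQlm.le) (sq_nonneg (mp - mm)),
      mul_nonneg (mul_nonneg (mul_nonneg hQ.le hmp.le) hmm.le) (sq_nonneg (lp - lm)),
      mul_nonneg hQ.le (sq_nonneg (mp*(Q+lp) - mm*(Q+lm)))]
  have h2 : d / (4*Q*((mp+mm)/2)) + Q / (((mp+mm)/2) * (Q + ((lp+lm)/2 + d)))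
      ≤ Q / (((mp+mm)/2) * (Q + (lp+lm)/2)) := by
    have e : Q / (((mp+mm)/2) * (Q + (lp+lm)/2)) - Q / (((mp+mm)/2) * (Q + ((lp+lm)/2 + d)))
        = Q*d / (((mp+mm)/2) * ((Q + (lp+lm)/2) * (Q + ((lp+lm)/2 + d)))) := by
      field_simp
      ring
    have hb1 : Q + (lp+lm)/2 ≤ 2*Q := by linarith
    have hb2 : Q + ((lp+lm)/2 + d) ≤ 2*Q := by linarith
    have h3 : d / (4*Q*((mp+mm)/2))
        ≤ Q*d / (((mp+mm)/2) * ((Q + (lp+lm)/2) * (Q + ((lp+lm)/2 + d)))) := by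
      rw [div_le_div_iff₀ (by positivity) (by positivity)]
      have hprod : (Q + (lp+lm)/2) * (Q + ((lp+lm)/2 + d)) ≤ (2*Q)*(2*Q) :=
        mul_le_mul hb1 hb2 hQl.le (by linarith)
      nlinarith [mul_nonneg hd hm.le, hprod, mul_nonneg (mul_nonneg hd hm.le) (sub_nonneg.2 hprod)]
    linarith
  linarith

lemma bellman_key {Q L up um ap am Sp Sm D : ℝ} (hQ : 0 < Q) (hL : 0 < L)
    (hap : 0 < ap) (ham : 0 < am) (hSp : 0 ≤ Sp) (hSm : 0 ≤ Sm) (hD : 0 ≤ D)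
    (hle : ((L/2)⁻¹ * Sp + (L/2)⁻¹ * Sm)/2 + D/L ≤ Q) :
    D / ((ap+am)/2)
      + (4*Q*(L/2)*(up - Q/(ap*(Q + (L/2)⁻¹*Sp)))
      + 4*Q*(L/2)*(um - Q/(am*(Q + (L/2)⁻¹*Sm))))
    ≤ 4*Q*L*((up+um)/2
        - Q/(((ap+am)/2)*(Q + (((L/2)⁻¹*Sp + (L/2)⁻¹*Sm)/2 + D/L)))) := by
  have hlp : 0 ≤ (L/2)⁻¹*Sp := mul_nonneg (by positivity) hSp
  have hlm : 0 ≤ (L/2)⁻¹*Sm := mul_nonneg (by positivity) hSm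
  have hd : 0 ≤ D/L := div_nonneg hD hL.le
  have core := bellman_core hQ hap ham hlp hlm hd hle
  set lp := (L/2)⁻¹*Sp with hlp_def
  set lm := (L/2)⁻¹*Sm with hlm_def
  set d := D/L with hd_def
  have hDd : D = d * L := by rw [hd_def]; field_simp
  rw [hDd]
  have h2 : Q + lp ≠ 0 := by positivity
  have h3 : Q + lm ≠ 0 := by positivity
  have h4 : Q + ((lp+lm)/2 + d) ≠ 0 := by positivity
  have hdiff : 4*Q*L*((up+um)/2 - Q/(((ap+am)/2)*(Q + ((lp+lm)/2 + d))))
      - (d*L/((ap+am)/2) + (4*Q*(L/2)*(up - Q/(ap*(Q+lp))) + 4*Q*(L/2)*(um - Q/(am*(Q+lm)))))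
      = 4*Q*L*((Q/(ap*(Q+lp)) + Q/(am*(Q+lm)))/2
          - (d/(4*Q*((ap+am)/2)) + Q/(((ap+am)/2)*(Q + ((lp+lm)/2 + d))))) := by
    field_simp
    ring
  have hdiff2 : 0 ≤ 4*Q*L*((Q/(ap*(Q+lp)) + Q/(am*(Q+lm)))/2
      - (d/(4*Q*((ap+am)/2)) + Q/(((ap+am)/2)*(Q + ((lp+lm)/2 + d))))) :=
    mul_nonneg (by positivity) (sub_nonneg.2 core)
  linarith

end CA



namespace CA

lemma bellman_ind (v : ℝ → ℝ) (hv : IsWeight v) (hvinv : IsWeight (fun x => (v x)⁻¹))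
    (lam : DI → ℝ) (hlam : ∀ I, 0 ≤ lam I) (Q : ℝ) (hQ : 0 < Q)
    (hCarl : ∀ (J : DI) (F : Finset DI), (∀ I ∈ F, DIsub I J) →
      (DIlen J)⁻¹ * ∑ I ∈ F, lam I ≤ Q) :
    ∀ (n : ℕ) (J : DI) (F : Finset DI), (∀ I ∈ F, DIsub I J) →
      (∀ I ∈ F, J.1 - I.1 < (n:ℤ)) →
      ∑ I ∈ F, lam I / avg (fun x => (v x)⁻¹) I
        ≤ 4*Q*DIlen J *
          (avg v J - Q / (avg (fun x => (v x)⁻¹) J * (Q + (DIlen J)⁻¹ * ∑ I ∈ F, lam I))) := by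
  intro n
  induction n with
  | zero =>
    intro J F hF hd
    have hFe : F = ∅ := by
      by_contra hne
      obtain ⟨I, hI⟩ := Finset.nonempty_iff_ne_empty.2 hne
      have h1 := sub_scale_le (hF I hI)
      have h2 := hd I hI
      norm_num at h2
      omega
    subst hFe
    simp only [Finset.sum_empty, mul_zero, add_zero]
    have hm := avg_pos hvinv J
    have hlen := DIlen_pos J
    have hcs := one_le_avg_mul_avg hv hvinv J
    have h1 : Q / (avg (fun x => (v x)⁻¹) J * Q) = 1 / avg (fun x => (v x)⁻¹) J := by
      rw [mul_comm, div_mul_eq_div_div, div_self hQ.ne']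
    rw [h1]
    have h2 : 1 / avg (fun x => (v x)⁻¹) J ≤ avg v J := by
      rw [div_le_iff₀ hm]; linarith
    exact mul_nonneg (mul_nonneg (mul_nonneg (by norm_num) hQ.le) hlen.le) (by linarith)
  | succ n ih =>
    intro J F hF hd
    classical
    set Gp := (F.filter (fun I => ¬ I = J)).filter (fun I => DIsub I (DIleft J)) with hGpdef
    set Gm := (F.filter (fun I => ¬ I = J)).filter (fun I => ¬ DIsub I (DIleft J)) with hGmdef
    have hmemp : ∀ I ∈ Gp, I ∈ F ∧ I ≠ J ∧ DIsub I (DIleft J) := by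
      intro I hI
      rw [hGpdef] at hI
      have h1 := Finset.mem_filter.1 hI
      have h2 := Finset.mem_filter.1 h1.1
      exact ⟨h2.1, h2.2, h1.2⟩
    have hmemm : ∀ I ∈ Gm, I ∈ F ∧ I ≠ J ∧ DIsub I (DIright J) := by
      intro I hI
      rw [hGmdef] at hI
      have h1 := Finset.mem_filter.1 hI
      have h2 := Finset.mem_filter.1 h1.1
      refine ⟨h2.1, h2.2, ?_⟩
      rcases sub_left_or_right (hF I h2.1) h2.2 with h | h
      · exact absurd h h1.2
      · exact h
    have hGpJ : ∀ I ∈ Gp, DIsub I (DIleft J) := fun I hI => (hmemp I hI).2.2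
    have hGmJ : ∀ I ∈ Gm, DIsub I (DIright J) := fun I hI => (hmemm I hI).2.2
    have hJp1 : (DIleft J).1 = J.1 - 1 := rfl
    have hJm1 : (DIright J).1 = J.1 - 1 := rfl
    have hGpd : ∀ I ∈ Gp, (DIleft J).1 - I.1 < (n:ℤ) := by
      intro I hI
      have h3 := hd I (hmemp I hI).1
      rw [hJp1]
      push_cast at h3
      omega
    have hGmd : ∀ I ∈ Gm, (DIright J).1 - I.1 < (n:ℤ) := by
      intro I hI
      have h3 := hd I (hmemm I hI).1
      rw [hJm1]
      push_cast at h3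
      omega
    have IHp := ih (DIleft J) Gp hGpJ hGpd
    have IHm := ih (DIright J) Gm hGmJ hGmd
    have hsplit : ∀ g : DI → ℝ, ∑ I ∈ F, g I
        = (if J ∈ F then g J else 0) + (∑ I ∈ Gp, g I + ∑ I ∈ Gm, g I) := by
      intro g
      rw [hGpdef, hGmdef, Finset.sum_filter_add_sum_filter_not]
      rw [← Finset.sum_filter_add_sum_filter_not F (fun I => I = J) g]
      congr 1
      rw [Finset.filter_eq']
      split_ifs <;> simp
    have hCp := hCarl (DIleft J) Gp hGpJ
    have hCm := hCarl (DIright J) Gm hGmJ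
    have hCF := hCarl J F hF
    rw [DIlen_left] at hCp IHp
    rw [DIlen_right] at hCm IHm
    have hlen := DIlen_pos J
    have hl_eq : (DIlen J)⁻¹ * ∑ I ∈ F, lam I
        = ((DIlen J/2)⁻¹ * ∑ I ∈ Gp, lam I + (DIlen J/2)⁻¹ * ∑ I ∈ Gm, lam I)/2
          + (if J ∈ F then lam J else 0)/DIlen J := by
      rw [hsplit lam]
      split_ifs <;> field_simp <;> ring
    rw [avg_split hv.2.2 J, avg_split hvinv.2.2 J, hl_eq]
    rw [hl_eq] at hCF
    rw [hsplit (fun I => lam I / avg (fun x => (v x)⁻¹) I)]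
    rw [avg_split hvinv.2.2 J]
    rw [show (if J ∈ F then lam J / ((avg (fun x => (v x)⁻¹) (DIleft J)
          + avg (fun x => (v x)⁻¹) (DIright J))/2) else 0)
        = (if J ∈ F then lam J else 0) / ((avg (fun x => (v x)⁻¹) (DIleft J)
          + avg (fun x => (v x)⁻¹) (DIright J))/2) by split_ifs <;> simp]
    have hd0 : 0 ≤ (if J ∈ F then lam J else 0) := by
      split_ifs
      · exact hlam J
      · exact le_refl 0
    have key := bellman_key (up := avg v (DIleft J)) (um := avg v (DIright J))
      hQ hlen (avg_pos hvinv (DIleft J)) (avg_pos hvinv (DIright J))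
      (Finset.sum_nonneg fun I _ => hlam I) (Finset.sum_nonneg fun I _ => hlam I)
      hd0 hCF
    linarith [IHp, IHm, key]

end CA

/-- weighted Carleson embedding lemma from Beznosova's paper.
Sums over `D(J)` are formalized via arbitrary finite subfamilies of `D(J)`,
which is equivalent since all summands are nonnegative.  The `A₂` characteristic
`[v]_{A₂^d}` is represented by any upper bound `A2` for `m_I v · m_I (v⁻¹)`. -/
theorem carleson_lemma_weight (v : ℝ → ℝ) (hv : IsWeight v)
    (hvinv : IsWeight (fun x => (v x)⁻¹))
    (lam : DI → ℝ) (hlam : ∀ I, 0 ≤ lam I)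
    (Q : ℝ) (hQ : 0 < Q)
    (hCarl : ∀ (J : DI) (F : Finset DI), (∀ I ∈ F, DIsub I J) →
      (DIlen J)⁻¹ * ∑ I ∈ F, lam I ≤ Q) :
    (∀ (J : DI) (F : Finset DI), (∀ I ∈ F, DIsub I J) →
      (DIlen J)⁻¹ * ∑ I ∈ F, lam I / avg (fun x => (v x)⁻¹) I ≤ 4 * Q * avg v J)
    ∧
    (∀ A2 : ℝ, (∀ I : DI, avg v I * avg (fun x => (v x)⁻¹) I ≤ A2) →
      ∀ (J : DI) (F : Finset DI), (∀ I ∈ F, DIsub I J) →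
        (DIlen J)⁻¹ * ∑ I ∈ F, lam I * avg v I ≤ 4 * Q * A2 * avg v J) := by
  have part1 : ∀ (J : DI) (F : Finset DI), (∀ I ∈ F, DIsub I J) →
      (DIlen J)⁻¹ * ∑ I ∈ F, lam I / avg (fun x => (v x)⁻¹) I ≤ 4 * Q * avg v J := by
    intro J F hF
    set n := (F.sup fun I => (J.1 - I.1).toNat) + 1 with hn
    have hdepth : ∀ I ∈ F, J.1 - I.1 < (n:ℤ) := by
      intro I hI
      have h1 : (J.1 - I.1).toNat ≤ F.sup (fun I => (J.1-I.1).toNat) := Finset.le_sup (f := fun I => (J.1 - I.1).toNat) hI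
      have h2 := Int.self_le_toNat (J.1 - I.1)
      rw [hn]
      push_cast
      omega
    have hmain := CA.bellman_ind v hv hvinv lam hlam Q hQ hCarl n J F hF hdepth
    have hm := CA.avg_pos hvinv J
    have hlen := CA.DIlen_pos J
    have hl0 : 0 ≤ (DIlen J)⁻¹ * ∑ I ∈ F, lam I :=
      mul_nonneg (inv_nonneg.2 hlen.le) (Finset.sum_nonneg fun I _ => hlam I)
    have hpos : 0 < Q / (avg (fun x => (v x)⁻¹) J * (Q + (DIlen J)⁻¹ * ∑ I ∈ F, lam I)) := by
      apply div_pos hQ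
      apply mul_pos hm
      linarith
    rw [mul_sub] at hmain
    have hterm : 0 ≤ 4*Q*DIlen J
        * (Q / (avg (fun x => (v x)⁻¹) J * (Q + (DIlen J)⁻¹ * ∑ I ∈ F, lam I))) :=
      mul_nonneg (mul_nonneg (mul_nonneg (by norm_num) hQ.le) hlen.le) hpos.le
    have h2 : ∑ I ∈ F, lam I / avg (fun x => (v x)⁻¹) I ≤ 4*Q*DIlen J * avg v J := by
      linarith
    have h3 := mul_le_mul_of_nonneg_left h2 (inv_nonneg.2 hlen.le)
    have e : (DIlen J)⁻¹ * (4*Q*DIlen J * avg v J) = 4*Q*avg v J := by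
      field_simp
    rw [e] at h3
    exact h3
  refine ⟨part1, ?_⟩
  intro A2 hA2 J F hF
  have hA2pos : 0 < A2 :=
    lt_of_lt_of_le one_pos (le_trans (CA.one_le_avg_mul_avg hv hvinv (0,0)) (hA2 (0,0)))
  have hterm : ∀ I ∈ F, lam I * avg v I ≤ A2 * (lam I / avg (fun x => (v x)⁻¹) I) := by
    intro I _
    have hm := CA.avg_pos hvinv I
    have hu : avg v I ≤ A2 / avg (fun x => (v x)⁻¹) I := by
      rw [le_div_iff₀ hm]; exact hA2 I
    calc lam I * avg v I ≤ lam I * (A2 / avg (fun x => (v x)⁻¹) I) :=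
          mul_le_mul_of_nonneg_left hu (hlam I)
      _ = A2 * (lam I / avg (fun x => (v x)⁻¹) I) := by ring
  have hsum : ∑ I ∈ F, lam I * avg v I ≤ A2 * ∑ I ∈ F, lam I / avg (fun x => (v x)⁻¹) I := by
    rw [Finset.mul_sum]
    exact Finset.sum_le_sum hterm
  have hlen := CA.DIlen_pos J
  have hp1 := part1 J F hF
  calc (DIlen J)⁻¹ * ∑ I ∈ F, lam I * avg v I
      ≤ (DIlen J)⁻¹ * (A2 * ∑ I ∈ F, lam I / avg (fun x => (v x)⁻¹) I) :=
        mul_le_mul_of_nonneg_left hsum (inv_nonneg.2 hlen.le)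
    _ = A2 * ((DIlen J)⁻¹ * ∑ I ∈ F, lam I / avg (fun x => (v x)⁻¹) I) := by ring
    _ ≤ A2 * (4 * Q * avg v J) := mul_le_mul_of_nonneg_left hp1 hA2pos.le
    _ = 4 * Q * A2 * avg v J := by ring
end

section
/- Let w be a weight on ℝ such that log w is locally integrable, and let {λ_I}_{I∈D} be a sequence of nonnegative numbers for which there exists Q > 0 with (1/|J|) Σ_{I∈D(J)} λ_I ≤ Q for every dyadic interval J ∈ D. Then for every J ∈ D: (1/|J|) Σ_{I∈D(J)} exp(m_I(log w)) · λ_I ≤ 4Q · m_J w. Consequently, if in addition [w]_{A_∞^d} < ∞, then for every J ∈ D: (1/|J|) Σ_{I∈D(J)} m_I w · λ_I ≤ 4Q · [w]_{A_∞^d} · m_J w. -/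
open MeasureTheory Set

lemma DIlen_pos (I : ℤ × ℤ) : 0 < DIlen I := zpow_pos (by norm_num) _

lemma DIset_lt (I : ℤ × ℤ) : (2:ℝ)^I.1 * I.2 < (2:ℝ)^I.1 * (I.2 + 1) := by
  have := DIlen_pos I
  unfold DIlen at this
  nlinarith

lemma volume_DIset (I : ℤ × ℤ) : volume (DIset I) = ENNReal.ofReal (DIlen I) := by
  rw [DIset, Real.volume_Ico]
  congr 1
  unfold DIlen; ring

lemma DIsub_iff (I J : ℤ × ℤ) : DIsub I J ↔
    ((2:ℝ)^J.1 * J.2 ≤ (2:ℝ)^I.1 * I.2 ∧ (2:ℝ)^I.1 * (I.2+1) ≤ (2:ℝ)^J.1 * (J.2+1)) := by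
  rw [DIsub, DIset, DIset, Set.Ico_subset_Ico_iff (DIset_lt I)]

lemma DIsub_gen {I J : ℤ × ℤ} (h : DIsub I J) : I.1 ≤ J.1 := by
  rw [DIsub_iff] at h
  have h2 : (2:ℝ)^I.1 ≤ (2:ℝ)^J.1 := by push_cast at h ⊢; nlinarith [h.1, h.2]
  exact (zpow_le_zpow_iff_right₀ (by norm_num : (1:ℝ) < 2)).mp h2

lemma two_zpow_sub_one (j : ℤ) : (2:ℝ)^(j-1) = 2^j / 2 := by
  rw [zpow_sub₀ (by norm_num : (2:ℝ) ≠ 0), zpow_one]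

lemma DIset_left (J : ℤ × ℤ) :
    DIset (DIleft J) = Set.Ico ((2:ℝ)^J.1 * J.2) ((2:ℝ)^(J.1-1) * (2*J.2+1)) := by
  rw [DIleft, DIset]
  have h := two_zpow_sub_one J.1
  congr 1 <;> push_cast <;> rw [h] <;> ring

lemma DIset_right (J : ℤ × ℤ) :
    DIset (DIright J) = Set.Ico ((2:ℝ)^(J.1-1) * (2*J.2+1)) ((2:ℝ)^J.1 * (J.2+1)) := by
  rw [DIright, DIset]
  have h := two_zpow_sub_one J.1
  congr 1 <;> push_cast <;> rw [h] <;> ring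

lemma DIsplit (J : ℤ × ℤ) : DIset (DIleft J) ∪ DIset (DIright J) = DIset J := by
  rw [DIset_left, DIset_right, DIset]
  apply Set.Ico_union_Ico_eq_Ico
  · have h := two_zpow_sub_one J.1
    have := DIlen_pos J; unfold DIlen at this
    rw [h]; push_cast; nlinarith
  · have h := two_zpow_sub_one J.1
    have := DIlen_pos J; unfold DIlen at this
    rw [h]; push_cast; nlinarith

lemma DIdisj (J : ℤ × ℤ) : Disjoint (DIset (DIleft J)) (DIset (DIright J)) := by
  rw [DIset_left, DIset_right]
  exact Set.Ico_disjoint_Ico_same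

lemma DIlen_left (J : ℤ × ℤ) : DIlen (DIleft J) = DIlen J / 2 := by
  unfold DIlen DIleft; exact two_zpow_sub_one J.1

lemma DIlen_right (J : ℤ × ℤ) : DIlen (DIright J) = DIlen J / 2 := by
  unfold DIlen DIright; exact two_zpow_sub_one J.1

lemma DIsub_left (J : ℤ × ℤ) : DIsub (DIleft J) J := fun x hx => by
  rw [← DIsplit J]; exact Set.mem_union_left _ hx

lemma DIsub_right (J : ℤ × ℤ) : DIsub (DIright J) J := fun x hx => by
  rw [← DIsplit J]; exact Set.mem_union_right _ hx

lemma DIeq_of_sub_of_ge {I J : ℤ × ℤ} (h : DIsub I J) (hg : J.1 ≤ I.1) : I = J := by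
  have h1 := DIsub_gen h
  have hj : I.1 = J.1 := le_antisymm h1 hg
  rw [DIsub_iff, hj] at h
  have hpos : (0:ℝ) < 2^J.1 := DIlen_pos (J.1, 0)
  have e1 : (J.2:ℝ) ≤ I.2 := by
    have := h.1
    rw [mul_le_mul_iff_right₀ hpos] at this; exact this
  have e2 : (I.2:ℝ) + 1 ≤ J.2 + 1 := by
    have := h.2
    rw [mul_le_mul_iff_right₀ hpos] at this; push_cast at this ⊢; linarith
  have : I.2 = J.2 := by exact_mod_cast le_antisymm (by exact_mod_cast (by linarith : (I.2:ℝ) ≤ J.2)) (by exact_mod_cast e1)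
  exact Prod.ext hj this

lemma DItrichotomy {I J : ℤ × ℤ} (h : DIsub I J) :
    I = J ∨ DIsub I (DIleft J) ∨ DIsub I (DIright J) := by
  by_cases hg : J.1 ≤ I.1
  · exact Or.inl (DIeq_of_sub_of_ge h hg)
  push_neg at hg
  have hi : I.1 ≤ J.1 - 1 := by omega
  rw [DIsub_iff] at h
  obtain ⟨h1, h2⟩ := h
  -- midpoint as a multiple of 2^I.1
  set d : ℕ := (J.1 - 1 - I.1).toNat with hd
  have hdz : J.1 - 1 - I.1 = (d:ℤ) := by omega
  set M : ℤ := 2^d * (2*J.2+1) with hM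
  have hmid : (2:ℝ)^(J.1-1) * (2*J.2+1) = (2:ℝ)^I.1 * M := by
    have : (2:ℝ)^(J.1-1) = (2:ℝ)^I.1 * (2:ℝ)^(J.1-1-I.1) := by
      rw [← zpow_add₀ (by norm_num : (2:ℝ) ≠ 0)]; ring_nf
    rw [this, hdz, zpow_natCast]
    push_cast [hM]
    ring
  rcases lt_or_ge I.2 M with hc | hc
  · right; left
    rw [DIsub_iff]
    constructor
    · -- left endpoint of DIleft J is 2^{J.1-1} * (2 J.2)
      show (2:ℝ)^(J.1-1) * ((2*J.2 : ℤ) : ℝ) ≤ _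
      calc (2:ℝ)^(J.1-1) * ((2*J.2:ℤ):ℝ) = (2:ℝ)^J.1 * J.2 := by
            rw [two_zpow_sub_one]; push_cast; ring
        _ ≤ (2:ℝ)^I.1 * I.2 := h1
    · show _ ≤ (2:ℝ)^(J.1-1) * (((2*J.2 : ℤ):ℝ) + 1)
      have : (2:ℝ)^I.1 * (I.2+1) ≤ (2:ℝ)^I.1 * M := by
        have hIM : (I.2:ℝ) + 1 ≤ M := by exact_mod_cast hc
        have := DIlen_pos (I.1, 0)
        unfold DIlen at this
        nlinarith
      calc (2:ℝ)^I.1 * (I.2+1) ≤ (2:ℝ)^I.1 * M := this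
        _ = (2:ℝ)^(J.1-1) * (((2*J.2:ℤ):ℝ) + 1) := by rw [← hmid]; push_cast; ring
  · right; right
    rw [DIsub_iff]
    constructor
    · show (2:ℝ)^(J.1-1) * ((2*J.2+1 : ℤ) : ℝ) ≤ _
      have hIM : (M:ℝ) ≤ I.2 := by exact_mod_cast hc
      have hp := DIlen_pos (I.1, 0)
      unfold DIlen at hp
      calc (2:ℝ)^(J.1-1) * ((2*J.2+1:ℤ):ℝ) = (2:ℝ)^I.1 * M := by rw [← hmid]; push_cast; ring
        _ ≤ (2:ℝ)^I.1 * I.2 := by nlinarith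
    · show _ ≤ (2:ℝ)^(J.1-1) * (((2*J.2+1 : ℤ):ℝ) + 1)
      calc (2:ℝ)^I.1 * (I.2+1) ≤ (2:ℝ)^J.1 * (J.2+1) := h2
        _ = (2:ℝ)^(J.1-1) * (((2*J.2+1:ℤ):ℝ) + 1) := by rw [two_zpow_sub_one]; push_cast; ring

lemma DIset_measurable (I : ℤ × ℤ) : MeasurableSet (DIset I) := measurableSet_Ico

lemma integrableOn_DIset {f : ℝ → ℝ} (hf : LocallyIntegrable f volume) (I : ℤ × ℤ) :
    IntegrableOn f (DIset I) :=
  (hf.integrableOn_isCompact isCompact_Icc).mono_set Set.Ico_subset_Icc_self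

lemma setIntegral_split (f : ℝ → ℝ) {J : ℤ × ℤ} (hf : IntegrableOn f (DIset J)) :
    ∫ x in DIset J, f x
      = (∫ x in DIset (DIleft J), f x) + ∫ x in DIset (DIright J), f x := by
  rw [← DIsplit J] at hf ⊢
  rw [setIntegral_union (DIdisj J) (DIset_measurable _)
    (hf.mono_set Set.subset_union_left) (hf.mono_set Set.subset_union_right)]

lemma avg_split (f : ℝ → ℝ) {J : ℤ × ℤ} (hf : IntegrableOn f (DIset J)) :
    avg f J = (avg f (DIleft J) + avg f (DIright J)) / 2 := by
  have hl := DIlen_pos J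
  unfold avg
  rw [setIntegral_split f hf, DIlen_left, DIlen_right]
  field_simp

lemma avg_eq_setAverage (f : ℝ → ℝ) (I : ℤ × ℤ) : avg f I = ⨍ x in DIset I, f x := by
  rw [setAverage_eq, measureReal_def, volume_DIset, ENNReal.toReal_ofReal (DIlen_pos I).le, smul_eq_mul, avg]

instance DIset_finiteMeasure (I : ℤ × ℤ) : IsFiniteMeasure (volume.restrict (DIset I)) :=
  ⟨by rw [Measure.restrict_apply_univ, volume_DIset]; exact ENNReal.ofReal_lt_top⟩

instance DIset_neZero (I : ℤ × ℤ) : NeZero (volume.restrict (DIset I)) := by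
  refine ⟨?_⟩
  rw [← Measure.measure_univ_ne_zero, Measure.restrict_apply_univ, volume_DIset]
  simp [ENNReal.ofReal_eq_zero, not_le, DIlen_pos I]

lemma jensen_exp {f : ℝ → ℝ} (I : ℤ × ℤ) (hf : IntegrableOn f (DIset I))
    (hef : IntegrableOn (fun x => Real.exp (f x)) (DIset I)) :
    Real.exp (avg f I) ≤ avg (fun x => Real.exp (f x)) I := by
  rw [avg_eq_setAverage, avg_eq_setAverage]
  exact convexOn_exp.map_average_le Real.continuous_exp.continuousOn isClosed_univ
    (Filter.Eventually.of_forall fun x => Set.mem_univ _) hf hef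

lemma jensen_sq {f : ℝ → ℝ} (I : ℤ × ℤ) (hf : IntegrableOn f (DIset I))
    (hf2 : IntegrableOn (fun x => (f x)^2) (DIset I)) :
    (avg f I)^2 ≤ avg (fun x => (f x)^2) I := by
  rw [avg_eq_setAverage, avg_eq_setAverage]
  exact (Even.convexOn_pow even_two).map_average_le (continuous_pow 2).continuousOn
    isClosed_univ (Filter.Eventually.of_forall fun x => Set.mem_univ _) hf hf2

lemma frac_ineq (x y p q : ℝ) (hp : 0 < p) (hq : 0 < q) :
    (x+y)^2/(p+q) ≤ x^2/p + y^2/q := by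
  rw [div_add_div _ _ (ne_of_gt hp) (ne_of_gt hq), div_le_div_iff₀ (by positivity) (by positivity)]
  nlinarith [sq_nonneg (x*q - y*p)]

lemma key_ineq (fp fm ap am a : ℝ) (hap : 0 ≤ ap) (ham : 0 ≤ am) (ha : 0 ≤ a)
    (hA : a + (ap+am)/2 ≤ 1) :
    a*((fp+fm)/2)^2 + 4*((fp+fm)/2)^2/(1 + (a + (ap+am)/2))
      ≤ 2*(fp^2/(1+ap) + fm^2/(1+am)) := by
  set s := (ap+am)/2 with hs
  have hs0 : 0 ≤ s := by positivity
  have h1 : (fp+fm)^2/((1+ap)+(1+am)) ≤ fp^2/(1+ap) + fm^2/(1+am) :=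
    frac_ineq fp fm (1+ap) (1+am) (by linarith) (by linarith)
  have h2 : 2*((fp+fm)^2/((1+ap)+(1+am))) = 4*((fp+fm)/2)^2/(1+s) := by
    rw [hs]; field_simp; ring
  set f2 := ((fp+fm)/2)^2 with hf2
  have hf2n : 0 ≤ f2 := sq_nonneg _
  have key : a + 4/(1+a+s) ≤ 4/(1+s) := by
    have hd : (1+s)*(1+a+s) ≤ 4 := by nlinarith
    have e1 : 4/(1+s) - 4/(1+a+s) = 4*a/((1+s)*(1+a+s)) := by
      field_simp; ring
    have e2 : a ≤ 4*a/((1+s)*(1+a+s)) := by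
      rw [le_div_iff₀ (by positivity)]
      nlinarith
    linarith
  have key2 : a*f2 + 4*f2/(1+a+s) ≤ 4*f2/(1+s) := by
    have := mul_le_mul_of_nonneg_right key hf2n
    calc a*f2 + 4*f2/(1+a+s) = (a + 4/(1+a+s))*f2 := by ring
      _ ≤ (4/(1+s))*f2 := this
      _ = 4*f2/(1+s) := by ring
  have : 1 + (a + s) = 1 + a + s := by ring
  rw [this]
  calc a*f2 + 4*f2/(1+a+s) ≤ 4*f2/(1+s) := key2
    _ = 2*((fp+fm)^2/((1+ap)+(1+am))) := by rw [h2]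
    _ ≤ 2*(fp^2/(1+ap) + fm^2/(1+am)) := by linarith

lemma base_ineq (a : ℝ) (ha : 0 ≤ a) (ha1 : a ≤ 1) : a + 4/(1+a) ≤ 4 := by
  have : 4/(1+a) ≤ 4 - a := by
    rw [div_le_iff₀ (by positivity)]
    nlinarith
  linarith

lemma assemble0 (Q ℓ IJ S0 f : ℝ) (hQ : 0 < Q) (hℓ : 0 < ℓ) (hS0 : 0 ≤ S0)
    (hc : S0 ≤ Q*ℓ) (hCS : ℓ*f^2 ≤ IJ) :
    S0*f^2 + 4*Q*ℓ*f^2/(1+S0/(Q*ℓ)) ≤ 4*Q*IJ := by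
  have hQl : (0:ℝ) < Q*ℓ := by positivity
  have ha : 0 ≤ S0/(Q*ℓ) := by positivity
  have ha1 : S0/(Q*ℓ) ≤ 1 := by rw [div_le_one hQl]; exact hc
  have h := base_ineq (S0/(Q*ℓ)) ha ha1
  have hmul := mul_le_mul_of_nonneg_right h (by positivity : (0:ℝ) ≤ Q*ℓ*f^2)
  have e : (S0/(Q*ℓ) + 4/(1+S0/(Q*ℓ)))*(Q*ℓ*f^2)
      = S0*f^2 + 4*Q*ℓ*f^2/(1+S0/(Q*ℓ)) := by
    have h1 : S0/(Q*ℓ)*(Q*ℓ*f^2) = S0*f^2 := by field_simp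
    calc (S0/(Q*ℓ) + 4/(1+S0/(Q*ℓ)))*(Q*ℓ*f^2)
        = S0/(Q*ℓ)*(Q*ℓ*f^2) + 4/(1+S0/(Q*ℓ))*(Q*ℓ*f^2) := by ring
      _ = S0*f^2 + 4*Q*ℓ*f^2/(1+S0/(Q*ℓ)) := by rw [h1]; ring
  rw [e] at hmul
  have hfin := mul_le_mul_of_nonneg_left hCS (by positivity : (0:ℝ) ≤ 4*Q)
  calc S0*f^2 + 4*Q*ℓ*f^2/(1+S0/(Q*ℓ)) ≤ 4*(Q*ℓ*f^2) := hmul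
    _ = 4*Q*(ℓ*f^2) := by ring
    _ ≤ 4*Q*IJ := hfin

lemma assemble (Q ℓ Ip Im S0 Sp Sm fp fm Tp Tm : ℝ)
    (hQ : 0 < Q) (hℓ : 0 < ℓ)
    (hS0 : 0 ≤ S0) (hSp : 0 ≤ Sp) (hSm : 0 ≤ Sm)
    (hc : S0+(Sp+Sm) ≤ Q*ℓ)
    (ihp : Tp + 4*Q*(ℓ/2)*fp^2/(1+Sp/(Q*(ℓ/2))) ≤ 4*Q*Ip)
    (ihm : Tm + 4*Q*(ℓ/2)*fm^2/(1+Sm/(Q*(ℓ/2))) ≤ 4*Q*Im) :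
    (S0*((fp+fm)/2)^2 + (Tp+Tm))
      + 4*Q*ℓ*((fp+fm)/2)^2/(1+(S0+(Sp+Sm))/(Q*ℓ)) ≤ 4*Q*(Ip+Im) := by
  have hQl : (0:ℝ) < Q*ℓ := by positivity
  have hQl2 : (0:ℝ) < Q*(ℓ/2) := by positivity
  have eA : S0/(Q*ℓ) + (Sp/(Q*(ℓ/2)) + Sm/(Q*(ℓ/2)))/2 = (S0+(Sp+Sm))/(Q*ℓ) := by
    field_simp
  have hA : S0/(Q*ℓ) + (Sp/(Q*(ℓ/2)) + Sm/(Q*(ℓ/2)))/2 ≤ 1 := by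
    rw [eA, div_le_one hQl]; exact hc
  have hkey := key_ineq fp fm (Sp/(Q*(ℓ/2))) (Sm/(Q*(ℓ/2))) (S0/(Q*ℓ))
    (by positivity) (by positivity) (by positivity) hA
  rw [eA] at hkey
  have hmul := mul_le_mul_of_nonneg_left hkey hQl.le
  have E : Q*ℓ*((S0/(Q*ℓ))*((fp+fm)/2)^2 + 4*((fp+fm)/2)^2/(1+(S0+(Sp+Sm))/(Q*ℓ)))
      = S0*((fp+fm)/2)^2 + 4*Q*ℓ*((fp+fm)/2)^2/(1+(S0+(Sp+Sm))/(Q*ℓ)) := by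
    have h1 : Q*ℓ*((S0/(Q*ℓ))*((fp+fm)/2)^2) = S0*((fp+fm)/2)^2 := by field_simp
    calc Q*ℓ*((S0/(Q*ℓ))*((fp+fm)/2)^2 + 4*((fp+fm)/2)^2/(1+(S0+(Sp+Sm))/(Q*ℓ)))
        = Q*ℓ*((S0/(Q*ℓ))*((fp+fm)/2)^2)
            + Q*ℓ*(4*((fp+fm)/2)^2/(1+(S0+(Sp+Sm))/(Q*ℓ))) := by ring
      _ = S0*((fp+fm)/2)^2 + 4*Q*ℓ*((fp+fm)/2)^2/(1+(S0+(Sp+Sm))/(Q*ℓ)) := by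
          rw [h1]; ring
  have E2 : Q*ℓ*(2*(fp^2/(1+Sp/(Q*(ℓ/2))) + fm^2/(1+Sm/(Q*(ℓ/2)))))
      = 4*Q*(ℓ/2)*fp^2/(1+Sp/(Q*(ℓ/2))) + 4*Q*(ℓ/2)*fm^2/(1+Sm/(Q*(ℓ/2))) := by
    ring
  rw [E, E2] at hmul
  linarith

lemma carleson_embedding (g : ℝ → ℝ)
    (hg : ∀ I, IntegrableOn g (DIset I))
    (hg2 : ∀ I, IntegrableOn (fun x => (g x)^2) (DIset I))
    (lam : ℤ × ℤ → ℝ) (hlam : ∀ I, 0 ≤ lam I) (Q : ℝ) (hQ : 0 < Q)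
    (hCarl : ∀ (J : ℤ × ℤ) (F : Finset (ℤ × ℤ)), (∀ I ∈ F, DIsub I J) →
      (DIlen J)⁻¹ * ∑ I ∈ F, lam I ≤ Q) :
    ∀ (n : ℕ) (J : ℤ × ℤ) (F : Finset (ℤ × ℤ)), (∀ I ∈ F, DIsub I J) →
      (∀ I ∈ F, J.1 - (n:ℤ) ≤ I.1) →
      (∑ I ∈ F, lam I * (avg g I)^2)
        + 4*Q*(DIlen J)*(avg g J)^2/(1 + (∑ I ∈ F, lam I)/(Q * DIlen J))
      ≤ 4*Q*∫ x in DIset J, (g x)^2 := by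
  have hbound : ∀ (K : ℤ × ℤ) (G : Finset (ℤ × ℤ)), (∀ I ∈ G, DIsub I K) →
      ∑ I ∈ G, lam I ≤ Q * DIlen K := by
    intro K G hG
    have h := hCarl K G hG
    have hK := DIlen_pos K
    calc ∑ I ∈ G, lam I = DIlen K * ((DIlen K)⁻¹ * ∑ I ∈ G, lam I) := by field_simp
      _ ≤ DIlen K * Q := mul_le_mul_of_nonneg_left h hK.le
      _ = Q * DIlen K := mul_comm _ _
  have hCS : ∀ J : ℤ × ℤ, DIlen J * (avg g J)^2 ≤ ∫ x in DIset J, (g x)^2 := by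
    intro J
    have h := jensen_sq J (hg J) (hg2 J)
    have hl := DIlen_pos J
    calc DIlen J * (avg g J)^2 ≤ DIlen J * avg (fun x => (g x)^2) J :=
          mul_le_mul_of_nonneg_left h hl.le
      _ = ∫ x in DIset J, (g x)^2 := by rw [avg]; field_simp
  intro n
  induction n with
  | zero =>
    intro J F hF hgen
    have hFsub : F ⊆ {J} := by
      rw [Finset.subset_singleton_iff']
      intro I hI
      exact DIeq_of_sub_of_ge (hF I hI) (by have := hgen I hI; push_cast at this; omega)
    have hl := DIlen_pos J
    rcases Finset.subset_singleton_iff.mp hFsub with h | h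
    · subst h
      simp only [Finset.sum_empty]
      have := assemble0 Q (DIlen J) (∫ x in DIset J, (g x)^2) 0 (avg g J) hQ hl
        le_rfl (by positivity) (hCS J)
      linarith
    · subst h
      simp only [Finset.sum_singleton]
      exact assemble0 Q (DIlen J) (∫ x in DIset J, (g x)^2) (lam J) (avg g J) hQ hl
        (hlam J) (by have := hbound J {J} (by simp [DIsub]); simpa using this) (hCS J)
  | succ n ih =>
    intro J F hF hgen
    classical
    set Fr := F.filter (fun I => ¬ I = J) with hFr
    set Fp := Fr.filter (fun I => DIsub I (DIleft J)) with hFp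
    set Fm := Fr.filter (fun I => ¬ DIsub I (DIleft J)) with hFm
    have hmemFp : ∀ I ∈ Fp, I ∈ F := fun I hI =>
      (Finset.mem_filter.mp (Finset.mem_filter.mp hI).1).1
    have hmemFm : ∀ I ∈ Fm, I ∈ F := fun I hI =>
      (Finset.mem_filter.mp (Finset.mem_filter.mp hI).1).1
    have hmemp : ∀ I ∈ Fp, DIsub I (DIleft J) := fun I hI => (Finset.mem_filter.mp hI).2
    have hmemm : ∀ I ∈ Fm, DIsub I (DIright J) := by
      intro I hI
      have h1 := Finset.mem_filter.mp hI
      have h2 := Finset.mem_filter.mp h1.1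
      rcases DItrichotomy (hF I h2.1) with h | h | h
      · exact absurd h h2.2
      · exact absurd h h1.2
      · exact h
    have hgenp : ∀ I ∈ Fp, (DIleft J).1 - (n:ℤ) ≤ I.1 := by
      intro I hI
      have := hgen I (hmemFp I hI)
      show J.1 - 1 - (n:ℤ) ≤ I.1
      push_cast at this; omega
    have hgenm : ∀ I ∈ Fm, (DIright J).1 - (n:ℤ) ≤ I.1 := by
      intro I hI
      have := hgen I (hmemFm I hI)
      show J.1 - 1 - (n:ℤ) ≤ I.1
      push_cast at this; omega
    have ihp := ih (DIleft J) Fp hmemp hgenp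
    have ihm := ih (DIright J) Fm hmemm hgenm
    have hsplit : ∀ h : ℤ × ℤ → ℝ, ∑ I ∈ F, h I
        = (∑ I ∈ F.filter (fun I => I = J), h I) + ((∑ I ∈ Fp, h I) + (∑ I ∈ Fm, h I)) := by
      intro h
      rw [hFp, hFm]
      rw [Finset.sum_filter_add_sum_filter_not Fr (fun I => DIsub I (DIleft J)) h]
      rw [hFr, Finset.sum_filter_add_sum_filter_not F (fun I => I = J) h]
    have hF0lam : ∑ I ∈ F.filter (fun I => I = J), (lam I * (avg g I)^2)
        = (∑ I ∈ F.filter (fun I => I = J), lam I) * (avg g J)^2 := by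
      rw [Finset.sum_mul]
      apply Finset.sum_congr rfl
      intro I hI
      rw [(Finset.mem_filter.mp hI).2]
    rw [hsplit (fun I => lam I * (avg g I)^2), hsplit lam, hF0lam,
      avg_split g (hg J), setIntegral_split _ (hg2 J)]
    rw [DIlen_left] at ihp
    rw [DIlen_right] at ihm
    exact assemble Q (DIlen J) _ _ _ _ _ _ _ _ _ hQ (DIlen_pos J)
      (Finset.sum_nonneg fun I _ => hlam I)
      (Finset.sum_nonneg fun I _ => hlam I)
      (Finset.sum_nonneg fun I _ => hlam I)
      (by rw [← hsplit lam]; exact hbound J F hF)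
      ihp ihm

lemma avg_congr_ae {f f' : ℝ → ℝ} (I : ℤ × ℤ)
    (h : f =ᵐ[volume.restrict (DIset I)] f') : avg f I = avg f' I := by
  unfold avg; rw [integral_congr_ae h]


/-- the "little lemma" with `exp(m_I log w)`.
Sums over `D(J)` are formalized via arbitrary finite subfamilies of `D(J)`,
which is equivalent since all summands are nonnegative.  The `A∞` characteristic
`[w]_{A∞^d}` is represented by any upper bound `Ainf` for
`m_I w · exp(−m_I (log w))`. -/
theorem carleson_lemma_Ainfty (w : ℝ → ℝ) (hw : IsWeight w)
    (hlog : LocallyIntegrable (fun x => Real.log (w x)) volume)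
    (lam : DI → ℝ) (hlam : ∀ I, 0 ≤ lam I)
    (Q : ℝ) (hQ : 0 < Q)
    (hCarl : ∀ (J : DI) (F : Finset DI), (∀ I ∈ F, DIsub I J) →
      (DIlen J)⁻¹ * ∑ I ∈ F, lam I ≤ Q) :
    (∀ (J : DI) (F : Finset DI), (∀ I ∈ F, DIsub I J) →
      (DIlen J)⁻¹ * ∑ I ∈ F, Real.exp (avg (fun x => Real.log (w x)) I) * lam I
        ≤ 4 * Q * avg w J)
    ∧
    (∀ Ainf : ℝ,
      (∀ I : DI, avg w I * Real.exp (-(avg (fun x => Real.log (w x)) I)) ≤ Ainf) →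
      ∀ (J : DI) (F : Finset DI), (∀ I ∈ F, DIsub I J) →
        (DIlen J)⁻¹ * ∑ I ∈ F, avg w I * lam I ≤ 4 * Q * Ainf * avg w J) := by
  obtain ⟨hwm, hwpos, hwint⟩ := hw
  set g : ℝ → ℝ := fun x => Real.sqrt (w x) with hgdef
  have hwI : ∀ I, IntegrableOn w (DIset I) := fun I => integrableOn_DIset hwint I
  have hgI : ∀ I, IntegrableOn g (DIset I) := by
    intro I
    have hmaj : IntegrableOn (fun x => 1 + |w x|) (DIset I) := by
      apply Integrable.add
      · exact (integrableOn_const_iff (by simp)).mpr (Or.inr (by rw [volume_DIset]; exact ENNReal.ofReal_lt_top))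
      · exact (hwI I).abs
    apply Integrable.mono hmaj
    · exact ((Real.continuous_sqrt.measurable).comp hwm).aestronglyMeasurable
    · apply Filter.Eventually.of_forall
      intro x
      have h1 : Real.sqrt (w x) ≤ Real.sqrt ((1+|w x|)^2) :=
        Real.sqrt_le_sqrt (by nlinarith [abs_nonneg (w x), le_abs_self (w x)])
      rw [Real.sqrt_sq (by positivity)] at h1
      rw [Real.norm_eq_abs, Real.norm_eq_abs, abs_of_nonneg (Real.sqrt_nonneg _),
        abs_of_nonneg (by positivity : (0:ℝ) ≤ 1 + |w x|)]
      exact h1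
  have hgsq : ∀ᵐ x ∂(volume : Measure ℝ), (g x)^2 = w x := by
    filter_upwards [hwpos] with x hx
    exact Real.sq_sqrt hx.le
  have hg2I : ∀ I, IntegrableOn (fun x => (g x)^2) (DIset I) := by
    intro I
    exact (hwI I).congr (ae_restrict_of_ae (hgsq.mono fun x hx => hx.symm))
  have hint_eq : ∀ I : ℤ × ℤ, (∫ x in DIset I, (g x)^2) = ∫ x in DIset I, w x := by
    intro I
    exact integral_congr_ae (ae_restrict_of_ae hgsq)
  -- Jensen : exp (m_I log w) ≤ (m_I g)^2
  have hjensen : ∀ I : ℤ × ℤ,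
      Real.exp (avg (fun x => Real.log (w x)) I) ≤ (avg g I)^2 := by
    intro I
    set h : ℝ → ℝ := fun x => Real.log (w x) / 2 with hh
    have hhI : IntegrableOn h (DIset I) := (integrableOn_DIset hlog I).div_const 2
    have hexp_ae : (fun x => Real.exp (h x)) =ᵐ[volume.restrict (DIset I)] g := by
      apply ae_restrict_of_ae
      filter_upwards [hwpos] with x hx
      rw [hh, hgdef]
      simp only
      rw [← Real.log_sqrt hx.le, Real.exp_log (Real.sqrt_pos.mpr hx)]
    have hexpI : IntegrableOn (fun x => Real.exp (h x)) (DIset I) :=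
      (hgI I).congr hexp_ae.symm
    have hje := jensen_exp I hhI hexpI
    have havg1 : avg (fun x => Real.exp (h x)) I = avg g I := avg_congr_ae I hexp_ae
    have havg2 : avg h I = avg (fun x => Real.log (w x)) I / 2 := by
      unfold avg
      rw [hh]
      rw [integral_div]
      ring
    rw [havg1, havg2] at hje
    have e : Real.exp (avg (fun x => Real.log (w x)) I)
        = Real.exp (avg (fun x => Real.log (w x)) I / 2) ^ 2 := by
      rw [sq, ← Real.exp_add]
      ring_nf
    rw [e]
    exact pow_le_pow_left₀ (Real.exp_nonneg _) hje 2
  have havgw : ∀ J : ℤ × ℤ, (∫ x in DIset J, (g x)^2) = DIlen J * avg w J := by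
    intro J
    rw [hint_eq J, avg]
    have := DIlen_pos J
    field_simp
  have hwavg_nn : ∀ I : ℤ × ℤ, 0 ≤ avg w I := by
    intro I
    have h1 : 0 ≤ ∫ x in DIset I, w x :=
      integral_nonneg_of_ae (ae_restrict_of_ae (hwpos.mono fun x hx => hx.le))
    exact mul_nonneg (inv_nonneg.mpr (DIlen_pos I).le) h1
  -- main part 1
  have main : ∀ (J : ℤ × ℤ) (F : Finset (ℤ × ℤ)), (∀ I ∈ F, DIsub I J) →
      (DIlen J)⁻¹ * ∑ I ∈ F, Real.exp (avg (fun x => Real.log (w x)) I) * lam I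
        ≤ 4 * Q * avg w J := by
    intro J F hF
    have hl := DIlen_pos J
    set n : ℕ := F.sup (fun I => (J.1 - I.1).toNat) with hn
    have hgen : ∀ I ∈ F, J.1 - (n:ℤ) ≤ I.1 := by
      intro I hI
      have h1 : (J.1 - I.1).toNat ≤ n := Finset.le_sup (f := fun I : ℤ × ℤ => (J.1 - I.1).toNat) hI
      omega
    have hemb := carleson_embedding g hgI hg2I lam hlam Q hQ hCarl n J F hF hgen
    have hSnn : 0 ≤ ∑ I ∈ F, lam I := Finset.sum_nonneg fun I _ => hlam I
    have hQl : (0:ℝ) < Q * DIlen J := mul_pos hQ hl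
    have hpos : 0 ≤ 4*Q*(DIlen J)*(avg g J)^2/(1 + (∑ I ∈ F, lam I)/(Q * DIlen J)) := by
      apply div_nonneg (mul_nonneg (by nlinarith) (sq_nonneg _))
      have : 0 ≤ (∑ I ∈ F, lam I)/(Q * DIlen J) := div_nonneg hSnn hQl.le
      linarith
    have h2 : ∑ I ∈ F, lam I * (avg g I)^2 ≤ 4*Q*(DIlen J * avg w J) := by
      rw [← havgw J]
      linarith
    have h3 : ∑ I ∈ F, Real.exp (avg (fun x => Real.log (w x)) I) * lam I
        ≤ ∑ I ∈ F, lam I * (avg g I)^2 := by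
      apply Finset.sum_le_sum
      intro I _
      calc Real.exp (avg (fun x => Real.log (w x)) I) * lam I
          ≤ (avg g I)^2 * lam I := mul_le_mul_of_nonneg_right (hjensen I) (hlam I)
        _ = lam I * (avg g I)^2 := mul_comm _ _
    calc (DIlen J)⁻¹ * ∑ I ∈ F, Real.exp (avg (fun x => Real.log (w x)) I) * lam I
        ≤ (DIlen J)⁻¹ * (4*Q*(DIlen J * avg w J)) := by
          apply mul_le_mul_of_nonneg_left _ (inv_nonneg.mpr hl.le)
          linarith
      _ = 4 * Q * avg w J := by field_simp
  refine ⟨main, ?_⟩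
  intro Ainf hAinf J F hF
  have hl := DIlen_pos J
  have hAnn : 0 ≤ Ainf := by
    refine le_trans ?_ (hAinf (0,0))
    exact mul_nonneg (hwavg_nn (0,0)) (Real.exp_nonneg _)
  have hptw : ∀ I : ℤ × ℤ, avg w I ≤ Ainf * Real.exp (avg (fun x => Real.log (w x)) I) := by
    intro I
    have h1 := mul_le_mul_of_nonneg_right (hAinf I)
      (Real.exp_nonneg (avg (fun x => Real.log (w x)) I))
    calc avg w I = avg w I * Real.exp (-(avg (fun x => Real.log (w x)) I))
          * Real.exp (avg (fun x => Real.log (w x)) I) := by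
          rw [mul_assoc, ← Real.exp_add]; simp
      _ ≤ Ainf * Real.exp (avg (fun x => Real.log (w x)) I) := h1
  have hsum : ∑ I ∈ F, avg w I * lam I
      ≤ Ainf * ∑ I ∈ F, Real.exp (avg (fun x => Real.log (w x)) I) * lam I := by
    rw [Finset.mul_sum]
    apply Finset.sum_le_sum
    intro I _
    calc avg w I * lam I
        ≤ Ainf * Real.exp (avg (fun x => Real.log (w x)) I) * lam I :=
          mul_le_mul_of_nonneg_right (hptw I) (hlam I)
      _ = Ainf * (Real.exp (avg (fun x => Real.log (w x)) I) * lam I) := by ring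
  calc (DIlen J)⁻¹ * ∑ I ∈ F, avg w I * lam I
      ≤ (DIlen J)⁻¹ * (Ainf * ∑ I ∈ F, Real.exp (avg (fun x => Real.log (w x)) I) * lam I) :=
        mul_le_mul_of_nonneg_left hsum (inv_nonneg.mpr hl.le)
    _ = Ainf * ((DIlen J)⁻¹ * ∑ I ∈ F, Real.exp (avg (fun x => Real.log (w x)) I) * lam I) := by
        ring
    _ ≤ Ainf * (4 * Q * avg w J) := mul_le_mul_of_nonneg_left (main J F hF) hAnn
    _ = 4 * Q * Ainf * avg w J := by ring
end
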